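/- Under the assumption ker_ℝ(A) = 0, the Graver basis of the N-scenario matrix A_N equals the set of vectors (0, 0, ..., v, ..., 0) (with v in a single scenario block and zeros elsewhere) such that (0, v) is an element of the Graver basis of the one-scenario matrix A_1 = [[A, 0], [T, W]]. -/
import Mathlib

/-- Componentwise sign-compatible domination `a ⊑ b` on integer vectors over any index type. -/
def ConfOn {ι : Type*} (a b : ι → ℤ) : Prop := ∀ i, 0 ≤ a i * b i ∧ |a i| ≤ |b i|

section

variable {l m k n : ℕ} (N : ℕ)
variable (A : Matrix (Fin l) (Fin m) ℤ) (T : Matrix (Fin k) (Fin m) ℤ)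
variable (W : Matrix (Fin k) (Fin n) ℤ)

/-- The nonzero integer kernel of the `N`-scenario matrix `A_N`, whose elements are
pairs `(x, v)` with `v i` the `i`-th scenario block. -/
def KerN : Set ((Fin m → ℤ) × (Fin N → Fin n → ℤ)) :=
  {p | p ≠ 0 ∧ A.mulVec p.1 = 0 ∧ ∀ i, T.mulVec p.1 + W.mulVec (p.2 i) = 0}

/-- `⊑` on the `N`-scenario vectors. -/
def ConfN (p q : (Fin m → ℤ) × (Fin N → Fin n → ℤ)) : Prop :=
  ConfOn p.1 q.1 ∧ ∀ i, ConfOn (p.2 i) (q.2 i)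

/-- The Graver basis of `A_N`: `⊑`-minimal elements of its nonzero integer kernel. -/
def GraverN : Set ((Fin m → ℤ) × (Fin N → Fin n → ℤ)) :=
  {p | p ∈ KerN N A T W ∧ ∀ q ∈ KerN N A T W, ConfN N q p → q = p}

/-- The nonzero integer kernel of the one-scenario matrix `A₁ = [[A,0],[T,W]]`. -/
def Ker1 : Set ((Fin m → ℤ) × (Fin n → ℤ)) :=
  {p | p ≠ 0 ∧ A.mulVec p.1 = 0 ∧ T.mulVec p.1 + W.mulVec p.2 = 0}

/-- `⊑` on the one-scenario vectors. -/
def Conf1 (p q : (Fin m → ℤ) × (Fin n → ℤ)) : Prop :=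
  ConfOn p.1 q.1 ∧ ConfOn p.2 q.2

/-- The Graver basis of `A₁`. -/
def Graver1 : Set ((Fin m → ℤ) × (Fin n → ℤ)) :=
  {p | p ∈ Ker1 A T W ∧ ∀ q ∈ Ker1 A T W, Conf1 q p → q = p}

end

lemma confOn_zero_left {ι : Type*} (b : ι → ℤ) : ConfOn 0 b := by
  intro i; simp

lemma confOn_refl {ι : Type*} (a : ι → ℤ) : ConfOn a a :=
  fun i => ⟨mul_self_nonneg _, le_rfl⟩

lemma confOn_zero_right {ι : Type*} {a : ι → ℤ} (h : ConfOn a 0) : a = 0 := by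
  funext i
  have := (h i).2
  simpa [abs_nonpos_iff] using this

/-- Under `ker_ℝ(A) = 0`, the Graver basis of the `N`-scenario matrix `A_N` equals the
set of vectors `(0, 0, ..., v, ..., 0)` (with `v` in a single scenario block and zeros
elsewhere) such that `(0, v)` belongs to the Graver basis of the one-scenario matrix
`A₁ = [[A,0],[T,W]]`. -/
theorem graver_stochastic_eq (l m k n N : ℕ)
    (A : Matrix (Fin l) (Fin m) ℤ) (T : Matrix (Fin k) (Fin m) ℤ)
    (W : Matrix (Fin k) (Fin n) ℤ)
    (hker : ∀ x : Fin m → ℝ, (A.map (Int.cast : ℤ → ℝ)).mulVec x = 0 → x = 0) :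
    GraverN N A T W =
      {p | ∃ (i : Fin N) (v : Fin n → ℤ),
        ((0 : Fin m → ℤ), v) ∈ Graver1 A T W ∧
        p = ((0 : Fin m → ℤ), fun j => if j = i then v else 0)} := by
  -- integer kernel of A is trivial
  have hkerZ : ∀ x : Fin m → ℤ, A.mulVec x = 0 → x = 0 := by
    intro x hx
    have h1 : (A.map (Int.cast : ℤ → ℝ)).mulVec (fun j => (x j : ℝ)) = 0 := by
      funext i
      have hxi := congrFun hx i
      simp only [Matrix.mulVec, dotProduct, Pi.zero_apply] at hxi ⊢
      have h0 : ((∑ j, A i j * x j : ℤ) : ℝ) = 0 := by rw [hxi]; simp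
      push_cast at h0
      simpa [Matrix.map_apply] using h0
    have h2 := hker _ h1
    funext j
    have h3 := congrFun h2 j
    simp only [Pi.zero_apply] at h3 ⊢
    exact_mod_cast h3
  -- membership of singleton-support vectors in KerN
  have hmem : ∀ (i : Fin N) (v : Fin n → ℤ), v ≠ 0 → W.mulVec v = 0 →
      ((0 : Fin m → ℤ), fun j => if j = i then v else 0) ∈ KerN N A T W := by
    intro i v hv hWv
    refine ⟨?_, by simp, ?_⟩
    · intro h
      have := congrFun (congrArg Prod.snd h) i
      simp at this
      exact hv this
    · intro j
      by_cases hji : j = i <;> simp [hji, hWv]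
  ext p
  constructor
  · rintro ⟨hpK, hpMin⟩
    obtain ⟨hp0, hpA, hpTW⟩ := hpK
    have hp1 : p.1 = 0 := hkerZ _ hpA
    have hW : ∀ j, W.mulVec (p.2 j) = 0 := by
      intro j
      have := hpTW j
      rw [hp1] at this
      simpa using this
    have hp2ne : p.2 ≠ 0 := by
      intro h
      exact hp0 (Prod.ext hp1 h)
    obtain ⟨i, hi⟩ := Function.ne_iff.mp hp2ne
    have hine : p.2 i ≠ 0 := by simpa using hi
    set q : (Fin m → ℤ) × (Fin N → Fin n → ℤ) :=
      ((0 : Fin m → ℤ), fun j => if j = i then p.2 i else 0) with hq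
    have hqK : q ∈ KerN N A T W := hmem i (p.2 i) hine (hW i)
    have hconf : ConfN N q p := by
      refine ⟨by rw [hp1]; exact confOn_zero_left _, ?_⟩
      intro j
      by_cases hji : j = i
      · subst hji; simpa [hq] using confOn_refl (p.2 j)
      · simpa [hq, hji] using confOn_zero_left (p.2 j)
    have hqp : q = p := hpMin q hqK hconf
    refine ⟨i, p.2 i, ⟨⟨?_, by simp, ?_⟩, ?_⟩, ?_⟩
    · intro h
      exact hine (congrArg Prod.snd h)
    · simpa using hW i
    · -- minimality in Graver1
      rintro ⟨y, w⟩ ⟨hyw0, _, hTW1⟩ ⟨hcy, hcw⟩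
      have hy0 : y = 0 := confOn_zero_right hcy
      have hw0 : w ≠ 0 := by
        intro h
        exact hyw0 (Prod.ext hy0 h)
      have hWw : W.mulVec w = 0 := by
        rw [hy0] at hTW1; simpa using hTW1
      set r : (Fin m → ℤ) × (Fin N → Fin n → ℤ) :=
        ((0 : Fin m → ℤ), fun j => if j = i then w else 0) with hr
      have hrK : r ∈ KerN N A T W := hmem i w hw0 hWw
      have hrconf : ConfN N r p := by
        refine ⟨by rw [hp1]; exact confOn_zero_left _, ?_⟩
        intro j
        by_cases hji : j = i
        · subst hji; simpa [hr] using hcw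
        · simpa [hr, hji] using confOn_zero_left (p.2 j)
      have hrp : r = p := hpMin r hrK hrconf
      have : w = p.2 i := by
        have := congrFun (congrArg Prod.snd hrp) i
        simpa [hr] using this
      exact Prod.ext hy0 this
    · exact hqp.symm
  · rintro ⟨i, v, ⟨⟨hv0, _, hTWv⟩, hvMin⟩, hpeq⟩
    subst hpeq
    have hvne : v ≠ 0 := by
      intro h
      exact hv0 (by simp [h])
    have hWv : W.mulVec v = 0 := by simpa using hTWv
    refine ⟨hmem i v hvne hWv, ?_⟩
    rintro q ⟨hq0, hqA, hqTW⟩ ⟨hc1, hc2⟩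
    have hq1 : q.1 = 0 := hkerZ _ hqA
    have hWq : ∀ j, W.mulVec (q.2 j) = 0 := by
      intro j
      have := hqTW j
      rw [hq1] at this
      simpa using this
    have hzero : ∀ j, j ≠ i → q.2 j = 0 := by
      intro j hji
      have := hc2 j
      simp only [hji, if_neg] at this
      exact confOn_zero_right this
    have hqi : q.2 i ≠ 0 := by
      intro h
      apply hq0
      refine Prod.ext hq1 ?_
      funext j
      by_cases hji : j = i
      · subst hji; exact h
      · exact hzero j hji
    have hci : ConfOn (q.2 i) v := by
      have := hc2 i
      simpa using this
    have hne : ((0 : Fin m → ℤ), q.2 i) ≠ 0 := by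
      intro h
      apply hqi
      have := congrArg Prod.snd h
      simpa using this
    have := hvMin (0, q.2 i) ⟨hne, by simp, by simpa using hWq i⟩ ⟨confOn_zero_left _, hci⟩
    have hqiv : q.2 i = v := by
      have := congrArg Prod.snd this
      simpa using this
    refine Prod.ext hq1 ?_
    funext j
    by_cases hji : j = i
    · subst hji; simp [hqiv]
    · simp [hji, hzero j hji]
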